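/- Let f : ℤ → ℂ satisfy (m + n)·f(m) - (n + m)·f(n) = (m-n)·f(m+n) for all m, n ∈ ℤ (the case λ = -1). Then f(m) = (1/2)·m·(m-1)·f(2) - m·(m-2)·f(1) for all m ∈ ℤ. -/

import Mathlib

theorem stmt_4 (f : ℤ → ℂ)
    (h : ∀ m n : ℤ,
      ((m : ℂ) + (n : ℂ)) * f m - ((n : ℂ) + (m : ℂ)) * f n
        = ((m : ℂ) - (n : ℂ)) * f (m + n)) :
    ∀ m : ℤ, f m = (1 / 2) * (m : ℂ) * ((m : ℂ) - 1) * f 2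
      - (m : ℂ) * ((m : ℂ) - 2) * f 1 := by
  have hneg1 : f (-1) = f 2 - 3 * f 1 := by
    have h1 := h 2 (-1)
    norm_num at h1
    linear_combination -h1
  have h3 : f 3 = 3 * f 2 - 3 * f 1 := by
    have h1 := h 2 1
    norm_num at h1
    linear_combination -h1
  intro m
  induction m using Int.induction_on with
  | zero =>
    have h1 := h 1 (-1)
    norm_num at h1
    simpa using h1
  | succ k ih =>
    rcases Nat.eq_zero_or_pos k with hk | hk
    · subst hk; norm_num
    rcases eq_or_lt_of_le (by omega : 1 ≤ k) with hk1 | hk2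
    · have : k = 1 := hk1.symm
      subst this; norm_num
    have hkc : ((k : ℂ) - 1) ≠ 0 := by
      have hk1 : (k : ℂ) ≠ 1 := by
        exact_mod_cast (by omega : k ≠ 1)
      exact sub_ne_zero.mpr hk1
    have h1 := h k 1
    push_cast at h1 ih ⊢
    apply mul_left_cancel₀ hkc
    linear_combination -h1 + ((k:ℂ)+1) * ih
  | pred k ih =>
    rcases Nat.eq_zero_or_pos k with hk | hk
    · subst hk; norm_num
      push_cast at ih
      linear_combination hneg1
    rcases eq_or_lt_of_le (by omega : 1 ≤ k) with hk1 | hk2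
    · have : k = 1 := hk1.symm
      subst this; norm_num
      have h1 := h (-2) 3
      norm_num at h1
      linear_combination h1 + h3
    have hkc : ((1:ℂ) - (k:ℂ)) ≠ 0 := by
      have hk1 : (k : ℂ) ≠ 1 := by
        exact_mod_cast (by omega : k ≠ 1)
      exact sub_ne_zero.mpr (Ne.symm hk1)
    have h1 := h (-k) (-1)
    rw [show (-(k:ℤ) + -1) = -(k:ℤ) - 1 from by ring] at h1
    push_cast at h1 ih ⊢
    apply mul_left_cancel₀ hkc
    linear_combination -h1 - ((k:ℂ)+1) * ih + ((k:ℂ)+1) * hneg1
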